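/- Let a and b be relatively prime positive integers with a > b, and let n ≥ 2 be an integer. Then there exists a prime p dividing a^n − b^n that does not divide a^m − b^m for any positive integer m < n, except when (a, b) = (2, 1) and n = 6, or when a + b is a power of 2 and n = 2. -/

import Mathlib

open Polynomial Finset


noncomputable def Zs (n : ℕ) (x y : ℤ) : ℤ :=
  ∑ i ∈ Finset.range (Nat.totient n + 1), (cyclotomic n ℤ).coeff i * x ^ i * y ^ (Nat.totient n - i)

lemma Zs_cast {K : Type*} [Field K] (n : ℕ) (x y : ℤ) (hy : (y : K) ≠ 0) :
    ((Zs n x y : ℤ) : K) = (y : K) ^ (Nat.totient n) *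
      Polynomial.eval ((x : K) * (y : K)⁻¹) (cyclotomic n K) := by
  rw [Polynomial.eval_eq_sum_range, natDegree_cyclotomic, Finset.mul_sum]
  rw [Zs]
  push_cast
  refine Finset.sum_congr rfl fun i hi => ?_
  rw [Finset.mem_range] at hi
  have hi' : i ≤ Nat.totient n := Nat.lt_succ_iff.mp hi
  rw [← map_cyclotomic_int n K, Polynomial.coeff_map]
  have h2 : (y:K) ^ Nat.totient n * (((cyclotomic n ℤ).coeff i : K) * ((x:K) * (y:K)⁻¹) ^ i)
      = ((cyclotomic n ℤ).coeff i : K) * (x:K) ^ i * ((y:K) ^ Nat.totient n / (y:K) ^ i) := by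
    rw [mul_pow, inv_pow]; ring
  simp only [eq_intCast] at *
  rw [h2, div_eq_mul_inv, ← pow_sub₀ _ hy hi']

lemma Zs_prod (n : ℕ) (hn : 0 < n) (x y : ℤ) (hy : y ≠ 0) :
    ∏ d ∈ n.divisors, Zs d x y = x ^ n - y ^ n := by
  have hy' : (y : ℝ) ≠ 0 := Int.cast_ne_zero.mpr hy
  apply (@Int.cast_injective ℝ _ _)
  push_cast
  rw [Finset.prod_congr rfl (fun d _ => Zs_cast d x y hy')]
  rw [Finset.prod_mul_distrib, Finset.prod_pow_eq_pow_sum, Nat.sum_totient,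
    ← Polynomial.eval_prod, prod_cyclotomic_eq_X_pow_sub_one hn, eval_sub, eval_pow, eval_X,
    eval_one, mul_pow, inv_pow, mul_sub, mul_one]
  field_simp

lemma Zs_one (x y : ℤ) : Zs 1 x y = x - y := by
  simp [Zs, cyclotomic_one, Finset.sum_range_succ, coeff_sub, coeff_one]
  ring

lemma Zs_two (x y : ℤ) : Zs 2 x y = x + y := by
  have : cyclotomic 2 ℤ = X + 1 := cyclotomic_two ℤ
  simp [Zs, this, Finset.sum_range_succ, coeff_add, coeff_one]
  ring

lemma Zs_pos (n : ℕ) {x y : ℤ} (hy : 0 < y) (hxy : y < x) : 0 < Zs n x y := by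
  have hy' : (y : ℝ) ≠ 0 := by positivity
  have hq : 1 < (x : ℝ) * (y : ℝ)⁻¹ := by
    rw [← div_eq_mul_inv, lt_div_iff₀ (by positivity)]
    exact_mod_cast by linarith
  have := cyclotomic_pos' n hq
  have h0 : (0:ℝ) < ((Zs n x y : ℤ) : ℝ) := by
    rw [Zs_cast n x y hy']
    positivity
  exact_mod_cast h0

lemma Zs_lower {n : ℕ} (hn : 2 ≤ n) {x y : ℤ} (hy : 0 < y) (hxy : y < x) :
    (x - y) ^ (Nat.totient n) < Zs n x y := by
  have hy' : (0:ℝ) < (y : ℝ) := by exact_mod_cast hy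
  have hq : 1 < (x : ℝ) * (y : ℝ)⁻¹ := by
    rw [← div_eq_mul_inv, lt_div_iff₀ hy']
    exact_mod_cast by linarith
  have h := sub_one_pow_totient_lt_cyclotomic_eval hn hq
  have h0 : ((x - y : ℤ) : ℝ) ^ (Nat.totient n) < ((Zs n x y : ℤ) : ℝ) := by
    rw [Zs_cast n x y (ne_of_gt hy')]
    calc ((x - y : ℤ) : ℝ) ^ (Nat.totient n)
        = (y:ℝ) ^ (Nat.totient n) * ((x:ℝ) * (y:ℝ)⁻¹ - 1) ^ (Nat.totient n) := by
          rw [← mul_pow]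
          congr 1
          push_cast
          field_simp
      _ < _ := by
          apply mul_lt_mul_of_pos_left h (by positivity)
  exact_mod_cast h0

lemma Zs_upper {n : ℕ} (hn : 3 ≤ n) {x y : ℤ} (hy : 0 < y) (hxy : y < x) :
    Zs n x y < (x + y) ^ (Nat.totient n) := by
  have hy' : (0:ℝ) < (y : ℝ) := by exact_mod_cast hy
  have hq : 1 < (x : ℝ) * (y : ℝ)⁻¹ := by
    rw [← div_eq_mul_inv, lt_div_iff₀ hy']
    exact_mod_cast by linarith
  have h := cyclotomic_eval_lt_add_one_pow_totient hn hq
  have h0 : ((Zs n x y : ℤ) : ℝ) < ((x + y : ℤ) : ℝ) ^ (Nat.totient n) := by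
    rw [Zs_cast n x y (ne_of_gt hy')]
    calc (y:ℝ) ^ (Nat.totient n) * eval ((x:ℝ) * (y:ℝ)⁻¹) (cyclotomic n ℝ)
        < (y:ℝ) ^ (Nat.totient n) * ((x:ℝ) * (y:ℝ)⁻¹ + 1) ^ (Nat.totient n) := by
          apply mul_lt_mul_of_pos_left h (by positivity)
      _ = _ := by
          rw [← mul_pow]
          congr 1
          push_cast
          field_simp
  exact_mod_cast h0

lemma Zs_expand {p n : ℕ} (hp : p.Prime) (hpn : p ∣ n) (hn : 0 < n) (x y : ℤ) (hy : y ≠ 0) :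
    Zs (n * p) x y = Zs n (x ^ p) (y ^ p) := by
  have hy' : (y : ℝ) ≠ 0 := Int.cast_ne_zero.mpr hy
  have hyp' : ((y ^ p : ℤ) : ℝ) ≠ 0 := by push_cast; positivity
  apply (@Int.cast_injective ℝ _ _)
  have htot : (n * p).totient = p * n.totient := by
    rw [mul_comm n p]; exact Nat.totient_mul_of_prime_of_dvd hp hpn
  rw [Zs_cast _ x y hy', Zs_cast _ (x^p) (y^p) hyp',
    ← cyclotomic_expand_eq_cyclotomic hp hpn, expand_eval, htot]
  push_cast
  rw [mul_pow, inv_pow, ← pow_mul]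

lemma Zs_expand' {p e : ℕ} (hp : p.Prime) (hpe : ¬ p ∣ e) (he : 0 < e) (x y : ℤ) (hy : y ≠ 0) :
    Zs e (x ^ p) (y ^ p) = Zs (e * p) x y * Zs e x y := by
  have hy' : (y : ℝ) ≠ 0 := Int.cast_ne_zero.mpr hy
  have hyp' : ((y ^ p : ℤ) : ℝ) ≠ 0 := by push_cast; positivity
  have hcop : Nat.Coprime e p := ((Nat.Prime.coprime_iff_not_dvd hp).mpr hpe).symm
  obtain ⟨q, rfl⟩ : ∃ q, p = q + 1 := ⟨p - 1, (Nat.succ_pred_eq_of_pos hp.pos).symm⟩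
  have htot : Nat.totient (e * (q+1)) + Nat.totient e = (q+1) * Nat.totient e := by
    rw [Nat.totient_mul hcop, Nat.totient_prime hp]
    simp [Nat.mul_succ]
    ring
  apply (@Int.cast_injective ℝ _ _)
  rw [Int.cast_mul, Zs_cast _ x y hy', Zs_cast _ (x^(q+1)) (y^(q+1)) hyp',
    Zs_cast _ x y hy']
  have hx2 : ((x^(q+1) : ℤ) : ℝ) = (x:ℝ)^(q+1) := by push_cast; rfl
  have hy2 : ((y^(q+1) : ℤ) : ℝ) = (y:ℝ)^(q+1) := by push_cast; rfl
  rw [hx2, hy2, ← inv_pow, ← mul_pow, ← expand_eval (q+1) (cyclotomic e ℝ) ((x:ℝ) * (y:ℝ)⁻¹),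
    cyclotomic_expand_eq_cyclotomic_mul hp hpe, eval_mul, ← pow_mul, ← htot, pow_add]
  ring


lemma Zs_dvd (n : ℕ) (hn : 0 < n) (x y : ℤ) (hy : y ≠ 0) : Zs n x y ∣ x ^ n - y ^ n := by
  refine ⟨∏ d ∈ n.divisors.erase n, Zs d x y, ?_⟩
  rw [← Zs_prod n hn x y hy, ← Finset.mul_prod_erase n.divisors _
    (Nat.mem_divisors.mpr ⟨dvd_rfl, hn.ne'⟩)]

lemma Zs_shift {q : ℕ} (hq : q.Prime) (e : ℕ) (he : 0 < e) :
    ∀ k, 1 ≤ k → ∀ x y : ℤ, y ≠ 0 →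
      Zs (e * q ^ k) x y = Zs (e * q) (x ^ (q ^ (k-1))) (y ^ (q ^ (k-1))) := by
  intro k
  induction k with
  | zero => omega
  | succ k ih =>
    intro _ x y hy
    rcases Nat.eq_zero_or_pos k with rfl | hk
    · simp
    · have h1 : e * q ^ (k+1) = (e * q ^ k) * q := by ring
      have h2 : q ∣ e * q ^ k := Dvd.dvd.mul_left (dvd_pow_self q hk.ne') e
      rw [h1, Zs_expand hq h2 (Nat.mul_pos he (pow_pos hq.pos k)) x y hy,
        ih hk (x^q) (y^q) (pow_ne_zero q hy)]
      congr 1 <;> rw [← pow_mul, ← pow_succ']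
      · congr 2; omega
      · congr 2; omega

lemma Zs_factor (n m : ℕ) (hm : m ∣ n) (hmn : m ≠ n) (hn : 0 < n) (x y : ℤ) (hy : y ≠ 0) :
    ∃ R : ℤ, x ^ n - y ^ n = Zs n x y * ((x ^ m - y ^ m) * R) := by
  have hm0 : 0 < m := Nat.pos_of_dvd_of_pos hm hn
  have hmlt : m < n := lt_of_le_of_ne (Nat.le_of_dvd hn hm) hmn
  have hsub : m.divisors ⊆ n.divisors.erase n := by
    intro d hd
    rw [Nat.mem_divisors] at hd
    rw [Finset.mem_erase, Nat.mem_divisors]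
    have hdm : d ≤ m := Nat.le_of_dvd hm0 hd.1
    exact ⟨by omega, hd.1.trans hm, hn.ne'⟩
  refine ⟨∏ d ∈ n.divisors.erase n \ m.divisors, Zs d x y, ?_⟩
  rw [← Zs_prod n hn x y hy, ← Finset.mul_prod_erase n.divisors _ (Nat.mem_divisors.mpr ⟨dvd_rfl, hn.ne'⟩)]
  congr 1
  rw [← Finset.prod_sdiff hsub, mul_comm]
  congr 1
  exact (Zs_prod m hm0 x y hy)

lemma Zs_sq_not_dvd {q : ℕ} (hq : q.Prime) (hodd : Odd q) {n : ℕ} (hqn : q ∣ n) (hn : 0 < n)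
    {x y : ℤ} (hy : 0 < y) (hxy : y < x)
    (hdvd : (q:ℤ) ∣ x ^ (n/q) - y ^ (n/q)) (hx : ¬(q:ℤ) ∣ x) :
    ¬ ((q:ℤ)^2 ∣ Zs n x y) := by
  intro hsq
  set m := n / q with hmdef
  have hm0 : 0 < m := Nat.div_pos (Nat.le_of_dvd hn hqn) hq.pos
  have hmn : m ≠ n := by
    have : m < n := Nat.div_lt_self hn hq.one_lt
    omega
  have hmul : m * q = n := Nat.div_mul_cancel hqn
  obtain ⟨R, hR⟩ := Zs_factor n m ⟨q, hmul.symm⟩ hmn hn x y (ne_of_gt hy)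
  have hgeom : (∑ i ∈ range q, (x^m) ^ i * (y^m) ^ (q - 1 - i)) * (x^m - y^m) = x^n - y^n := by
    rw [geom_sum₂_mul, ← pow_mul, ← pow_mul, hmul]
  have hXY : x^m - y^m ≠ 0 := by
    have : y^m < x^m := pow_lt_pow_left₀ hxy (le_of_lt hy) hm0.ne'
    omega
  have hS : (∑ i ∈ range q, (x^m) ^ i * (y^m) ^ (q - 1 - i)) = Zs n x y * R := by
    have h3 : (∑ i ∈ range q, (x^m) ^ i * (y^m) ^ (q - 1 - i)) * (x^m - y^m)
        = (Zs n x y * R) * (x^m - y^m) := by rw [hgeom, hR]; ring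
    exact mul_right_cancel₀ hXY h3
  have hmult := emultiplicity_geom_sum₂_eq_one (x := x^m) (y := y^m)
    (Nat.prime_iff_prime_int.mp hq) hodd hdvd (fun h => hx ((Nat.prime_iff_prime_int.mp hq).dvd_of_dvd_pow h))
  have h2 : (q:ℤ)^2 ∣ (∑ i ∈ range q, (x^m) ^ i * (y^m) ^ (q - 1 - i)) := by
    rw [hS]; exact Dvd.dvd.mul_right hsq R
  have := not_pow_dvd_of_emultiplicity_lt (by rw [hmult]; exact_mod_cast Nat.one_lt_two) h2
  exact this

section zmod
variable {q : ℕ} [Fact q.Prime] {a b : ℕ}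

lemma dvd_iff_pow_eq_one (ha : ¬ q ∣ a) (hb : ¬ q ∣ b) (m : ℕ) :
    (q:ℤ) ∣ (a:ℤ)^m - (b:ℤ)^m ↔ ((a : ZMod q) * (b : ZMod q)⁻¹)^m = 1 := by
  have hb0 : (b : ZMod q) ≠ 0 := by
    rw [Ne, ZMod.natCast_eq_zero_iff]; exact hb
  have hbm : (b : ZMod q)^m ≠ 0 := pow_ne_zero _ hb0
  rw [← ZMod.intCast_zmod_eq_zero_iff_dvd]
  push_cast
  rw [sub_eq_zero, mul_pow, inv_pow, ← div_eq_mul_inv, div_eq_one_iff_eq hbm]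

lemma Zs_root (ha : ¬ q ∣ a) (hb : ¬ q ∣ b) (n : ℕ)
    (h : (q:ℤ) ∣ Zs n (a:ℤ) (b:ℤ)) :
    Polynomial.eval ((a : ZMod q) * (b : ZMod q)⁻¹) (cyclotomic n (ZMod q)) = 0 := by
  have hb0 : ((b:ℤ) : ZMod q) ≠ 0 := by
    rw [Int.cast_natCast, Ne, ZMod.natCast_eq_zero_iff]; exact hb
  have h0 : ((Zs n (a:ℤ) (b:ℤ) : ℤ) : ZMod q) = 0 := by
    rwa [ZMod.intCast_zmod_eq_zero_iff_dvd]
  rw [Zs_cast n _ _ hb0] at h0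
  rcases mul_eq_zero.mp h0 with h1 | h1
  · exact absurd h1 (pow_ne_zero _ hb0)
  · rw [← h1]; norm_cast

lemma Zs_order (ha : ¬ q ∣ a) (hb : ¬ q ∣ b) {n : ℕ} (hn : 0 < n)
    (h : (q:ℤ) ∣ Zs n (a:ℤ) (b:ℤ)) :
    orderOf ((a : ZMod q) * (b : ZMod q)⁻¹) = n / q ^ (n.factorization q) := by
  have hroot := Zs_root ha hb n h
  set x := (a : ZMod q) * (b : ZMod q)⁻¹ with hx
  set k := n.factorization q with hk
  set t := n / q ^ k with ht
  have htq : ¬ q ∣ t := Nat.not_dvd_ordCompl (Fact.out) hn.ne'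
  have htn : q ^ k * t = n := Nat.ordProj_mul_ordCompl_eq_self n q
  have ht0 : 0 < t := Nat.ordCompl_pos q hn.ne'
  have hne : NeZero ((t : ZMod q)) := ⟨by rw [Ne, ZMod.natCast_eq_zero_iff]; exact htq⟩
  by_cases hqn : q ∣ n
  · have hk0 : 0 < k := by
      rw [hk]
      exact Nat.Prime.factorization_pos_of_dvd (Fact.out) hn.ne' hqn
    have hcyc := cyclotomic_mul_prime_pow_eq (ZMod q) htq hk0
    rw [htn] at hcyc
    rw [hcyc] at hroot
    rw [eval_pow, pow_eq_zero_iff] at hroot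
    · exact ((isRoot_cyclotomic_iff).mp hroot).eq_orderOf.symm
    · have h1 : q ^ (k-1) < q ^ k := by
        apply Nat.pow_lt_pow_right (Fact.out : Nat.Prime q).one_lt
        omega
      omega
  · have hk0 : k = 0 := by rw [hk, Nat.factorization_eq_zero_of_not_dvd hqn]
    have htn' : t = n := by rw [ht, hk0, pow_zero, Nat.div_one]
    haveI : NeZero ((n : ZMod q)) := by rw [← htn']; exact hne
    rw [htn']
    exact ((isRoot_cyclotomic_iff).mp hroot).eq_orderOf.symm
end zmod

lemma two_pow_gt : ∀ m : ℕ, 2 ≤ m → (m:ℤ) + 1 < 2 ^ m := by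
  intro m hm
  induction m with
  | zero => omega
  | succ k ih =>
    rcases Nat.lt_or_ge k 2 with h | h
    · interval_cases k
      · omega
      · norm_num
    · have := ih h
      have h2 : (2:ℤ) ^ (k+1) = 2 * 2 ^ k := by ring
      push_cast at *
      omega

lemma two_pow_ge' : ∀ m : ℕ, 2 ≤ m → (m:ℤ) + 2 ≤ 2 ^ m := by
  intro m hm
  induction m with
  | zero => omega
  | succ k ih =>
    rcases Nat.lt_or_ge k 2 with h | h
    · interval_cases k
      · omega
      · norm_num
    · have := ih h
      have h2 : (2:ℤ) ^ (k+1) = 2 * 2 ^ k := by ring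
      push_cast at *
      omega

lemma Zs_eq_gt {q e : ℕ} (hq : q.Prime) (hodd : Odd q) (he : e ∣ q - 1) (he0 : 0 < e)
    {A B : ℤ} (hB : 0 < B) (hAB : B < A)
    (hexc : ¬(e = 2 ∧ q = 3 ∧ A = 2 ∧ B = 1)) : (q:ℤ) < Zs (e * q) A B := by
  have hq2 : q ≠ 2 := by rintro rfl; exact (by decide : ¬ Odd 2) hodd
  have hq3 : 3 ≤ q := by have := hq.two_le; omega
  have hA2 : (2:ℤ) ≤ A := by omega
  have heq : e < q := by
    have := Nat.le_of_dvd (by omega) he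
    omega
  have hqe : ¬ q ∣ e := fun h => absurd (Nat.le_of_dvd he0 h) (by omega)
  have hB' : (0:ℤ) < B := hB
  have key := Zs_expand' hq hqe he0 A B (ne_of_gt hB)
  have hApos : (0:ℤ) < A := by omega
  have hABq : B ^ q < A ^ q := pow_lt_pow_left₀ hAB (le_of_lt hB) hq.pos.ne'
  have hBqpos : (0:ℤ) < B ^ q := pow_pos hB q
  have hZpos : 0 < Zs e A B := Zs_pos e hB hAB
  have hZeqpos : 0 < Zs (e * q) A B := Zs_pos (e * q) hB hAB
  have hq1 : (q:ℤ) < 2 ^ (q-1) := by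
    have := two_pow_gt (q-1) (by omega)
    have hc : ((q-1:ℕ):ℤ) + 1 = q := by push_cast [Nat.cast_sub hq.one_lt.le]; ring
    omega
  -- case split on e
  rcases Nat.lt_or_ge e 3 with he3 | he3
  · interval_cases e
    · -- e = 1
      simp only [one_mul]
      rw [Zs_one, Zs_one, one_mul] at key
      obtain ⟨r, hr⟩ : ∃ r, q = r + 1 := ⟨q - 1, by omega⟩
      have hApow : A ^ r * (A - B) ≤ A ^ q - B ^ q := by
        have h1 : B ^ r ≤ A ^ r := pow_le_pow_left₀ hB.le hAB.le r
        have h2 : A ^ q = A ^ r * A := by rw [hr, pow_succ]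
        have h3 : B ^ q = B ^ r * B := by rw [hr, pow_succ]
        nlinarith [pow_pos hB r, pow_pos hApos r]
      rw [key] at hApow
      have hcancel : A ^ r ≤ Zs q A B :=
        le_of_mul_le_mul_right hApow (show (0:ℤ) < A - B by omega)
      have h2r : (2:ℤ) ^ r ≤ A ^ r := pow_le_pow_left₀ (by norm_num) hA2 r
      have : (q:ℤ) < 2 ^ r := by rw [hr] at hq1 ⊢; simpa using hq1
      linarith
    · -- e = 2
      rw [Zs_two, Zs_two] at key
      have hABpos : (0:ℤ) < A + B := by omega
      rcases eq_or_ne q 3 with rfl | hq5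
      · -- q = 3
        have hZ6 : Zs (2*3) A B = A^2 - A*B + B^2 := by
          have hexp : A^3 + B^3 = (A + B) * (A^2 - A*B + B^2) := by ring
          have := key
          rw [hexp] at this
          have := mul_left_cancel₀ (ne_of_gt hABpos) (by linarith : (A+B) * (A^2 - A*B + B^2) = (A+B) * Zs (2*3) A B)
          omega
        rcases eq_or_lt_of_le hA2 with hA | hA
        · -- A = 2, B = 1 : exception
          have hB1 : B = 1 := by omega
          exact absurd ⟨rfl, rfl, hA.symm, hB1⟩ hexc
        · rw [hZ6]
          push_cast
          nlinarith
      · -- q ≥ 5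
        have hq5' : 5 ≤ q := by
          have : q ≠ 4 := by rintro rfl; norm_num at hq
          omega
        have h2q : 2 * (q:ℤ) ≤ 2 ^ (q-1) := by
          have := two_pow_ge' (q-2) (by omega)
          have hc : ((q-2:ℕ):ℤ) + 2 = q := by push_cast [Nat.cast_sub (by omega : 2 ≤ q)]; ring
          have hp : (2:ℤ) ^ (q-1) = 2 * 2 ^ (q-2) := by
            rw [show q - 1 = (q-2) + 1 by omega, pow_succ]; ring
          omega
        have hApow : (2:ℤ)^(q-1) * A ≤ A ^ q := by
          have h1 : (2:ℤ)^(q-1) ≤ A^(q-1) := pow_le_pow_left₀ (by norm_num) hA2 _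
          have h2 : A ^ q = A ^ (q-1) * A := by rw [← pow_succ, show q-1+1 = q by omega]
          nlinarith
        have hlt : (q:ℤ) * (A + B) < A ^ q + B ^ q := by
          nlinarith [pow_pos hB q]
        rw [key] at hlt
        exact lt_of_mul_lt_mul_right (by linarith) hABpos.le
  · -- e ≥ 3
    have hq5' : 5 ≤ q := by
      have h4 : 4 ≤ q := by have := Nat.le_of_dvd (by omega) he; omega
      have : q ≠ 4 := by rintro rfl; norm_num at hq
      omega
    have hphi : 2 ≤ e.totient := by
      have hev := Nat.totient_even (by omega : 2 < e)
      have hpos := Nat.totient_pos.mpr he0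
      rcases hev with ⟨r, hr⟩
      omega
    have hL1 : (A^q - B^q) ^ e.totient < Zs e (A^q) (B^q) := Zs_lower (by omega) hBqpos hABq
    have hL2 : Zs e A B < (A + B) ^ e.totient := Zs_upper he3 hB hAB
    have hstep : (2:ℤ)^(q-3) * (A + B) ≤ A ^ q - B ^ q := by
      have h1 : (2:ℤ)^(q-3) ≤ A^(q-3) := pow_le_pow_left₀ (by norm_num) hA2 _
      have h2 : A ^ (q-1) = A ^ (q-3) * A * A := by
        rw [← pow_succ, ← pow_succ, show q-3+1+1 = q-1 by omega]
      have h3 : A ^ (q-1) * (A - B) ≤ A ^ q - B ^ q := by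
        have hBr : B ^ (q-1) ≤ A ^ (q-1) := pow_le_pow_left₀ hB.le hAB.le _
        have hA' : A ^ q = A ^ (q-1) * A := by rw [← pow_succ, show q-1+1 = q by omega]
        have hB'' : B ^ q = B ^ (q-1) * B := by rw [← pow_succ, show q-1+1 = q by omega]
        nlinarith [pow_pos hB (q-1), pow_pos hApos (q-1)]
      have c1 : (2:ℤ)^(q-3)*(A+B) ≤ A^(q-3)*(A+B) := mul_le_mul_of_nonneg_right h1 (by omega)
      have c2 : A^(q-3)*(A+B) ≤ A^(q-3)*(2*A) :=
        mul_le_mul_of_nonneg_left (by omega) (pow_pos hApos _).le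
      have hpa : 0 < A^(q-3)*A := mul_pos (pow_pos hApos _) hApos
      have c3 : A^(q-3)*(2*A) ≤ A^(q-3)*A*A := by
        calc A^(q-3)*(2*A) = (A^(q-3)*A)*2 := by ring
          _ ≤ (A^(q-3)*A)*A := mul_le_mul_of_nonneg_left hA2 hpa.le
          _ = A^(q-3)*A*A := by ring
      have c4 : A^(q-1) ≤ A^(q-1)*(A-B) :=
        le_mul_of_one_le_right (pow_pos hApos (q-1)).le (by omega)
      linarith
    have hpow : ((2:ℤ)^(q-3) * (A + B)) ^ e.totient ≤ (A ^ q - B ^ q) ^ e.totient := by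
      apply pow_le_pow_left₀ (by positivity) hstep
    have hexp2 : (q:ℤ) * (A + B) ^ e.totient ≤ ((2:ℤ)^(q-3) * (A + B)) ^ e.totient := by
      rw [mul_pow, ← pow_mul]
      have hee : q - 1 ≤ (q-3) * e.totient := by
        have := Nat.mul_le_mul_left (q-3) hphi
        omega
      have h2 : (2:ℤ) ^ (q-1) ≤ 2 ^ ((q-3) * e.totient) := pow_le_pow_right₀ (by norm_num) hee
      have h3 : (0:ℤ) ≤ (A + B) ^ e.totient := (pow_pos (by omega : (0:ℤ) < A + B) _).le
      exact mul_le_mul_of_nonneg_right (le_trans (le_of_lt hq1) h2) h3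
    have hfin : (q:ℤ) * Zs e A B < Zs (e * q) A B * Zs e A B := by
      calc (q:ℤ) * Zs e A B < (q:ℤ) * (A + B) ^ e.totient := by
            exact mul_lt_mul_of_pos_left hL2 (by exact_mod_cast hq.pos)
        _ ≤ (A ^ q - B ^ q) ^ e.totient := le_trans hexp2 hpow
        _ < Zs e (A^q) (B^q) := hL1
        _ = Zs (e * q) A B * Zs e A B := key
    exact lt_of_mul_lt_mul_right hfin hZpos.le


set_option maxHeartbeats 2000000 in
theorem stmt_2 (a b : ℕ) (hb : 0 < b) (hab : b < a) (hcop : Nat.Coprime a b)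
    (n : ℕ) (hn : 2 ≤ n)
    (hexc1 : ¬ (a = 2 ∧ b = 1 ∧ n = 6))
    (hexc2 : ¬ ((∃ s : ℕ, a + b = 2 ^ s) ∧ n = 2)) :
    ∃ p : ℕ, p.Prime ∧ p ∣ a ^ n - b ^ n ∧
      ∀ m : ℕ, 0 < m → m < n → ¬ p ∣ a ^ m - b ^ m := by
  by_contra hcon
  push_neg at hcon
  have hb' : (0:ℤ) < (b:ℤ) := by exact_mod_cast hb
  have hab' : ((b:ℤ)) < (a:ℤ) := by exact_mod_cast hab
  have hbne : ((b:ℤ)) ≠ 0 := ne_of_gt hb'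
  have hn0 : 0 < n := by omega
  have hcast : ∀ m : ℕ, ((a^m - b^m : ℕ) : ℤ) = (a:ℤ)^m - (b:ℤ)^m := fun m => by
    push_cast [Nat.cast_sub (Nat.pow_le_pow_left hab.le m)]
    ring
  -- Zs is at least 2
  have hZlow := Zs_lower hn hb' hab'
  have hone : (1:ℤ) ≤ ((a:ℤ) - (b:ℤ)) ^ (Nat.totient n) := by
    calc (1:ℤ) = 1 ^ (Nat.totient n) := (one_pow _).symm
      _ ≤ _ := pow_le_pow_left₀ (by norm_num) (by omega) _
  have hZ1 : 1 < Zs n (a:ℤ) (b:ℤ) := lt_of_le_of_lt hone hZlow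
  -- structure of prime divisors of Zs n a b
  have struct : ∀ r : ℕ, r.Prime → (r:ℤ) ∣ Zs n (a:ℤ) (b:ℤ) →
      ¬ r ∣ a ∧ ¬ r ∣ b ∧ r ∣ n ∧ 0 < n.factorization r ∧
      (n / r ^ (n.factorization r)) ∣ r - 1 ∧
      orderOf ((a : ZMod r) * (b : ZMod r)⁻¹) = n / r ^ (n.factorization r) := by
    intro r hr hrZ
    haveI : Fact r.Prime := ⟨hr⟩
    have hrab : (r:ℤ) ∣ (a:ℤ)^n - (b:ℤ)^n := hrZ.trans (Zs_dvd n hn0 _ _ hbne)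
    have hrprime : Prime ((r:ℤ)) := Nat.prime_iff_prime_int.mp hr
    have hra : ¬ r ∣ a := by
      intro h
      have h1 : (r:ℤ) ∣ (a:ℤ)^n := dvd_pow (Int.natCast_dvd_natCast.mpr h) hn0.ne'
      have h2 : (r:ℤ) ∣ (b:ℤ)^n := by
        have := dvd_sub h1 hrab
        rwa [sub_sub_cancel] at this
      have h3 : r ∣ b := Int.natCast_dvd_natCast.mp (hrprime.dvd_of_dvd_pow h2)
      have : r ∣ 1 := hcop ▸ Nat.dvd_gcd h h3
      have h4 := Nat.dvd_one.mp this
      have := hr.one_lt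
      omega
    have hrb : ¬ r ∣ b := by
      intro h
      have h1 : (r:ℤ) ∣ (b:ℤ)^n := dvd_pow (Int.natCast_dvd_natCast.mpr h) hn0.ne'
      have h2 : (r:ℤ) ∣ (a:ℤ)^n := by
        have := dvd_add hrab h1
        rwa [sub_add_cancel] at this
      have h3 : r ∣ a := Int.natCast_dvd_natCast.mp (hrprime.dvd_of_dvd_pow h2)
      have : r ∣ 1 := hcop ▸ Nat.dvd_gcd h3 h
      have h4 := Nat.dvd_one.mp this
      have := hr.one_lt
      omega
    have horder := Zs_order hra hrb hn0 hrZ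
    set X := (a : ZMod r) * (b : ZMod r)⁻¹ with hXdef
    have ha0 : (a : ZMod r) ≠ 0 := by
      rw [Ne, ZMod.natCast_eq_zero_iff]; exact hra
    have hb0 : (b : ZMod r) ≠ 0 := by
      rw [Ne, ZMod.natCast_eq_zero_iff]; exact hrb
    have hX0 : X ≠ 0 := mul_ne_zero ha0 (inv_ne_zero hb0)
    have hXd : orderOf X ∣ r - 1 :=
      orderOf_dvd_of_pow_eq_one (ZMod.pow_card_sub_one_eq_one hX0)
    have hrn : r ∣ n := by
      by_contra hrn
      rw [Nat.factorization_eq_zero_of_not_dvd hrn] at horder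
      simp only [pow_zero, Nat.div_one] at horder
      obtain ⟨m, hm0, hmn, hmdvd⟩ := hcon r hr
        (Int.natCast_dvd_natCast.mp (by rw [hcast n]; exact hrab))
      have hmz : (r:ℤ) ∣ (a:ℤ)^m - (b:ℤ)^m := by
        rw [← hcast m]; exact_mod_cast hmdvd
      have hXm := (dvd_iff_pow_eq_one hra hrb m).mp hmz
      have hdvd := orderOf_dvd_of_pow_eq_one hXm
      rw [horder] at hdvd
      exact absurd (Nat.le_of_dvd hm0 hdvd) (by omega)
    have hk0 : 0 < n.factorization r := hr.factorization_pos_of_dvd hn0.ne' hrn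
    exact ⟨hra, hrb, hrn, hk0, horder ▸ hXd, horder⟩
  -- pick a prime divisor q of Zs n a b
  have hZ0 : 0 ≤ Zs n (a:ℤ) (b:ℤ) := by linarith
  set M := (Zs n (a:ℤ) (b:ℤ)).toNat with hMdef
  have hMZ : (M:ℤ) = Zs n (a:ℤ) (b:ℤ) := Int.toNat_of_nonneg hZ0
  have hM2 : 2 ≤ M := by
    have : (1:ℤ) < (M:ℤ) := by rw [hMZ]; exact hZ1
    exact_mod_cast this
  set q := M.minFac with hqdef
  have hq : q.Prime := Nat.minFac_prime (by omega)
  haveI : Fact q.Prime := ⟨hq⟩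
  have hqZ : (q:ℤ) ∣ Zs n (a:ℤ) (b:ℤ) := by
    rw [← hMZ]; exact_mod_cast Nat.minFac_dvd M
  obtain ⟨hqa, hqb, hqn, hk0, hediv, horder⟩ := struct q hq hqZ
  set k := n.factorization q with hkdef
  set e := n / q ^ k with hedef
  have hn_eq : q ^ k * e = n := Nat.ordProj_mul_ordCompl_eq_self n q
  have he0 : 0 < e := Nat.ordCompl_pos q hn0.ne'
  -- all primes dividing M are q
  have huniq : ∀ {r : ℕ}, r.Prime → r ∣ M → r = q := by
    intro r hr hrM
    have hrZ : (r:ℤ) ∣ Zs n (a:ℤ) (b:ℤ) := by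
      rw [← hMZ]; exact_mod_cast hrM
    obtain ⟨_, _, hrn, hk0r, hedivr, _⟩ := struct r hr hrZ
    by_contra hne
    have h1 : r ∣ e := by
      have hh : r ∣ q^k * e := hn_eq ▸ hrn
      rcases (Nat.Prime.dvd_mul hr).mp hh with h | h
      · exact absurd ((Nat.prime_dvd_prime_iff_eq hr hq).mp (hr.dvd_of_dvd_pow h)) hne
      · exact h
    have hrq : r < q := by
      have h2 : r ∣ q - 1 := h1.trans hediv
      have := Nat.le_of_dvd (by have := hq.two_le; omega) h2
      omega
    have h3 : q ∣ (n / r ^ (n.factorization r)) := by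
      have hh : q ∣ r ^ (n.factorization r) * (n / r ^ (n.factorization r)) := by
        rw [Nat.ordProj_mul_ordCompl_eq_self n r]; exact hqn
      rcases (Nat.Prime.dvd_mul hq).mp hh with h | h
      · exact absurd ((Nat.prime_dvd_prime_iff_eq hq hr).mp (hq.dvd_of_dvd_pow h)).symm hne
      · exact h
    have hqr : q < r := by
      have h2 : q ∣ r - 1 := h3.trans hedivr
      have := Nat.le_of_dvd (by have := hr.two_le; omega) h2
      omega
    omega
  obtain ⟨t, hMpow⟩ : ∃ t, M = q ^ t :=
    ⟨_, Nat.eq_prime_pow_of_unique_prime_dvd (by omega) (fun hprime hdvd => huniq hprime hdvd)⟩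
  rcases eq_or_ne q 2 with hq2 | hq2
  · -- q = 2 : n = 2 ^ k
    have he1 : e = 1 := by
      have : e ∣ 1 := by rw [← show q - 1 = 1 by omega]; exact hediv
      exact Nat.dvd_one.mp this
    have hn2 : 2 ^ k = n := by rw [← hn_eq, he1, hq2]; ring
    rcases eq_or_ne k 1 with hk1 | hk2
    · -- n = 2 : a + b is a power of 2, contradiction with hexc2
      have hn2' : n = 2 := by rw [← hn2, hk1, pow_one]
      subst hn2'
      have hMab : M = a + b := by
        have h1 : (M:ℤ) = ((a+b:ℕ):ℤ) := by rw [hMZ, Zs_two]; push_cast; ring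
        exact_mod_cast h1
      exact hexc2 ⟨⟨t, by rw [← hMab, ← hq2]; exact hMpow⟩, rfl⟩
    · -- k ≥ 2
      have hk2' : 2 ≤ k := by omega
      have sq1 : ∀ c : ℤ, Odd c → (4:ℤ) ∣ c^2 - 1 := by
        rintro c ⟨j, rfl⟩
        exact ⟨j^2+j, by ring⟩
      have h2a : ¬ 2 ∣ a := hq2 ▸ hqa
      have h2b : ¬ 2 ∣ b := hq2 ▸ hqb
      have hoa : Odd ((a:ℤ)) := by
        have : Odd a := Nat.odd_iff.mpr (by omega)
        exact_mod_cast this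
      have hob : Odd ((b:ℤ)) := by
        have : Odd b := Nat.odd_iff.mpr (by omega)
        exact_mod_cast this
      set c := (a:ℤ)^(2^(k-2)) with hcdef
      set d := (b:ℤ)^(2^(k-2)) with hddef
      have hoc : Odd c := hoa.pow
      have hod : Odd d := hob.pow
      have hpowsplit : ∀ x : ℤ, x ^ (2^(k-1)) = (x ^ (2^(k-2)))^2 := by
        intro x
        rw [← pow_mul]
        congr 1
        rw [← pow_succ]
        congr 1
        omega
      have hMcd : (M:ℤ) = c^2 + d^2 := by
        have h1 : 1 * q ^ k = n := by rw [one_mul, ← hn_eq, he1, mul_one]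
        have h2 := Zs_shift hq 1 one_pos k (by omega) (a:ℤ) (b:ℤ) hbne
        rw [h1] at h2
        rw [hMZ, h2, one_mul, hq2, Zs_two, hpowsplit ((a:ℤ)), hpowsplit ((b:ℤ))]
      have hc2 : (2:ℤ) ≤ (a:ℤ) := by
        have : 2 ≤ a := by omega
        exact_mod_cast this
      have hM5 : (5:ℤ) ≤ (M:ℤ) := by
        have h1 : (4:ℤ) ≤ c^2 := by
          have h2 : (2:ℤ) ≤ c := by
            calc (2:ℤ) = 2^1 := by norm_num
              _ ≤ 2^(2^(k-2)) := pow_le_pow_right₀ (by norm_num) (Nat.one_le_two_pow)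
              _ ≤ c := pow_le_pow_left₀ (by norm_num) hc2 _
          nlinarith
        have hd1' : (1:ℤ) ≤ d := by
          calc (1:ℤ) = 1^(2^(k-2)) := (one_pow _).symm
            _ ≤ d := pow_le_pow_left₀ (by norm_num) (by exact_mod_cast hb) _
        nlinarith
      have ht2 : 2 ≤ t := by
        by_contra hcontra
        have : M ≤ 2 := by
          rw [hMpow, hq2]
          calc 2 ^ t ≤ 2 ^ 1 := Nat.pow_le_pow_right (by norm_num) (by omega)
            _ = 2 := rfl
        have : (M:ℤ) ≤ 2 := by exact_mod_cast this
        omega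
      have h4M : (4:ℤ) ∣ (M:ℤ) := by
        have : (4:ℕ) ∣ M := by
          rw [hMpow, hq2, show t = 2 + (t-2) by omega, pow_add]
          exact ⟨2^(t-2), by norm_num⟩
        exact_mod_cast this
      have hd1 := sq1 c hoc
      have hd2 := sq1 d hod
      rw [hMcd] at h4M
      omega
  · -- q odd
    have hodd : Odd q := hq.odd_of_ne_two hq2
    have hs : 0 < q ^ (k-1) := pow_pos hq.pos _
    set A := (a:ℤ) ^ (q ^ (k-1)) with hAdef
    set B := (b:ℤ) ^ (q ^ (k-1)) with hBdef
    have hBpos : (0:ℤ) < B := pow_pos hb' _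
    have hABlt : B < A := pow_lt_pow_left₀ hab' hb'.le hs.ne'
    have hshift : Zs n (a:ℤ) (b:ℤ) = Zs (e * q) A B := by
      have h1 : e * q ^ k = n := by rw [mul_comm]; exact hn_eq
      rw [← h1]
      exact Zs_shift hq e he0 k hk0 (a:ℤ) (b:ℤ) hbne
    have hexcZ : ¬(e = 2 ∧ q = 3 ∧ A = 2 ∧ B = 1) := by
      rintro ⟨he2, hq3, hA2, hB1⟩
      have hb1 : b = 1 := by
        by_contra hb1
        have h2b : (2:ℤ) ≤ (b:ℤ) := by
          have : 2 ≤ b := by omega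
          exact_mod_cast this
        have : (2:ℤ) ≤ B := by
          calc (2:ℤ) = 2^1 := by norm_num
            _ ≤ 2 ^ (q ^ (k-1)) := pow_le_pow_right₀ (by norm_num) hs
            _ ≤ B := pow_le_pow_left₀ (by norm_num) h2b _
        omega
      have ha2 : (2:ℤ) ≤ (a:ℤ) := by
        have : 2 ≤ a := by omega
        exact_mod_cast this
      have hk1 : k = 1 := by
        by_contra hk1
        have hk2 : 2 ≤ k := by omega
        have hs3 : 3 ≤ q ^ (k-1) := by
          calc 3 = 3^1 := by norm_num
            _ ≤ 3 ^ (k-1) := Nat.pow_le_pow_right (by norm_num) (by omega)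
            _ = q ^ (k-1) := by rw [hq3]
        have : (2:ℤ)^(q^(k-1)) ≤ A := pow_le_pow_left₀ (by norm_num) ha2 _
        have h8 : (8:ℤ) ≤ 2^(q^(k-1)) := by
          calc (8:ℤ) = 2^3 := by norm_num
            _ ≤ 2 ^ (q^(k-1)) := pow_le_pow_right₀ (by norm_num) hs3
        omega
      have ha2' : a = 2 := by
        have : A = (a:ℤ) := by rw [hAdef, hk1]; simp
        have : (a:ℤ) = 2 := by omega
        exact_mod_cast this
      have hn6 : n = 6 := by
        rw [← hn_eq, he2, hq3, hk1]
        norm_num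
      exact hexc1 ⟨ha2', hb1, hn6⟩
    have hgt : (q:ℤ) < Zs (e * q) A B := Zs_eq_gt hq hodd hediv he0 hBpos hABlt hexcZ
    -- multiplicity at most one
    have hnq : n / q = q^(k-1) * e := by
      have h1 : n = q * (q^(k-1) * e) := by
        rw [← hn_eq, ← mul_assoc, ← pow_succ']
        congr 2
        omega
      rw [h1, Nat.mul_div_cancel_left _ hq.pos]
    have hdvd' : (q:ℤ) ∣ (a:ℤ) ^ (n/q) - (b:ℤ) ^ (n/q) := by
      apply (dvd_iff_pow_eq_one hqa hqb (n/q)).mpr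
      apply orderOf_dvd_iff_pow_eq_one.mp
      rw [horder, hnq]
      exact dvd_mul_left e (q^(k-1))
    have hqa' : ¬ (q:ℤ) ∣ (a:ℤ) := fun h => hqa (Int.natCast_dvd_natCast.mp h)
    have hsq : ¬ (q:ℤ)^2 ∣ Zs n (a:ℤ) (b:ℤ) :=
      Zs_sq_not_dvd hq hodd hqn hn0 hb' hab' hdvd' hqa'
    have ht1 : t ≤ 1 := by
      by_contra hcontra
      apply hsq
      have h1 : (q:ℤ)^2 ∣ (M:ℤ) := by
        rw [hMpow]
        push_cast
        exact pow_dvd_pow _ (by omega)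
      rwa [hMZ] at h1
    have hMq : M ≤ q := by
      calc M = q ^ t := hMpow
        _ ≤ q ^ 1 := Nat.pow_le_pow_right hq.pos ht1
        _ = q := pow_one q
    have hfin : (q:ℤ) < (M:ℤ) := by
      rw [hMZ, hshift]; exact hgt
    have : (q:ℤ) ≥ (M:ℤ) := by exact_mod_cast hMq
    omega
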